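/- Suppose t₂ < t₁ with (t₂, t₁) ⊆ [a, b], and suppose μ agrees with Lebesgue measure on (t₂, t₁), i.e. μ(E) = λ(E) for every Borel set E ⊆ (t₂, t₁). Set p₁ = μ([t₁, b]) and p₂ = μ([a, t₂]). Then for every t ∈ (t₂, t₁): −∫_{ℝ ∖ (t₂,t₁)} (t − x)⁻² dμ(x) − 1/(t − t₁) + 1/(t − t₂) ≥ 1/((t − t₂ + p₂)(t₁ − t + p₁)) > 0. -/

import Mathlib

open MeasureTheory Complex Filter Set

noncomputable section

/-- The support of a measure on `ℝ`. -/
def msupport (μ : Measure ℝ) : Set ℝ := {x | ∀ U ∈ nhds x, μ U ≠ 0}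

lemma integrableOn_of_bdd {μ : Measure ℝ} [IsFiniteMeasure μ] {S : Set ℝ} (hS : MeasurableSet S)
    {f : ℝ → ℝ} (hf : Measurable f) {C : ℝ} (h : ∀ x ∈ S, |f x| ≤ C) :
    IntegrableOn f S μ :=
  Integrable.mono' (integrable_const C) hf.aestronglyMeasurable
    ((ae_restrict_iff' hS).mpr (Filter.Eventually.of_forall h))

lemma side_bound (μ : Measure ℝ) [IsProbabilityMeasure μ] (hle : μ ≤ volume) (s c : ℝ)
    (hc : 0 < c) :
    ∫ x in Set.Iic s, ((s + c - x) ^ 2)⁻¹ ∂μ ≤ 1 / c - 1 / (c + (μ (Set.Iic s)).toReal) := by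
  set p := (μ (Set.Iic s)).toReal with hpdef
  have hp0 : 0 ≤ p := ENNReal.toReal_nonneg
  rcases eq_or_lt_of_le hp0 with hp | hp
  · -- mass zero case
    have h0 : μ (Set.Iic s) = 0 := by
      rcases (ENNReal.toReal_eq_zero_iff _).mp hp.symm with h | h
      · exact h
      · exact absurd h (measure_ne_top μ _)
    rw [Measure.restrict_eq_zero.mpr h0]
    simp [← hp]
  -- main case : 0 < p
  set f : ℝ → ℝ := fun x => ((s + c - x) ^ 2)⁻¹ with hfdef
  have hfm : Measurable f := by fun_prop
  have hfnn : ∀ x, 0 ≤ f x := fun x => by positivity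
  have hint : IntegrableOn f (Set.Iic s) μ := by
    apply integrableOn_of_bdd measurableSet_Iic hfm (C := (c ^ 2)⁻¹)
    intro x hx
    rw [_root_.abs_of_nonneg (hfnn x)]
    apply inv_anti₀ (by positivity)
    have : x ≤ s := hx
    nlinarith
  have key := hint.integral_eq_integral_meas_lt
    (Filter.Eventually.of_forall fun x => hfnn x)
  set m : ℝ → ℝ := fun u => min p (max 0 ((Real.sqrt u)⁻¹ - c)) with hmdef
  -- pointwise bound on the distribution function
  have claim1 : ∀ u ∈ Set.Ioi (0:ℝ),
      ((μ.restrict (Set.Iic s)) {x | u < f x}).toReal ≤ m u := by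
    intro u hu
    have hu0 : (0:ℝ) < u := hu
    have hmeas : MeasurableSet {x : ℝ | u < f x} := measurableSet_lt measurable_const hfm
    rw [Measure.restrict_apply hmeas]
    apply le_min
    · exact ENNReal.toReal_mono (measure_ne_top μ _) (measure_mono inter_subset_right)
    · have hincl : {x : ℝ | u < f x} ∩ Set.Iic s ⊆ Set.Ioc (s + c - (Real.sqrt u)⁻¹) s := by
        rintro x ⟨hxf, hxs⟩
        have hxs' : x ≤ s := hxs
        constructor
        · have hd : 0 < s + c - x := by linarith
          have hd2 : 0 < (s + c - x) ^ 2 := by positivity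
          have hxf' : u < ((s + c - x) ^ 2)⁻¹ := hxf
          have h1 : (s + c - x) ^ 2 < u⁻¹ := by
            have e1 : u * u⁻¹ = 1 := mul_inv_cancel₀ hu0.ne'
            have e2 : (s + c - x) ^ 2 * ((s + c - x) ^ 2)⁻¹ = 1 := mul_inv_cancel₀ hd2.ne'
            nlinarith
          have h2 : s + c - x < Real.sqrt u⁻¹ := (Real.lt_sqrt hd.le).mpr h1
          rw [Real.sqrt_inv] at h2
          linarith
        · exact hxs'
      have h3 : μ ({x : ℝ | u < f x} ∩ Set.Iic s) ≤ ENNReal.ofReal ((Real.sqrt u)⁻¹ - c) := by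
        calc μ ({x : ℝ | u < f x} ∩ Set.Iic s) ≤ μ (Set.Ioc (s + c - (Real.sqrt u)⁻¹) s) :=
              measure_mono hincl
          _ ≤ volume (Set.Ioc (s + c - (Real.sqrt u)⁻¹) s) := hle _
          _ = ENNReal.ofReal ((Real.sqrt u)⁻¹ - c) := by rw [Real.volume_Ioc]; ring_nf
      calc (μ ({x : ℝ | u < f x} ∩ Set.Iic s)).toReal
          ≤ (ENNReal.ofReal ((Real.sqrt u)⁻¹ - c)).toReal :=
            ENNReal.toReal_mono ENNReal.ofReal_ne_top h3
        _ ≤ max 0 ((Real.sqrt u)⁻¹ - c) := by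
            rcases le_or_gt 0 ((Real.sqrt u)⁻¹ - c) with h | h
            · rw [ENNReal.toReal_ofReal h]; exact le_max_right _ _
            · rw [ENNReal.ofReal_of_nonpos h.le]; simpa using le_max_left (0:ℝ) _
  -- the dominating function integral
  set A : ℝ := ((c + p) ^ 2)⁻¹ with hAdef
  set B : ℝ := (c ^ 2)⁻¹ with hBdef
  have hcp : 0 < c + p := by linarith
  have hA : 0 < A := by positivity
  have hB : 0 < B := by positivity
  have hAB : A < B := by
    have h2 : c ^ 2 < (c + p) ^ 2 := by nlinarith
    exact inv_strictAnti₀ (by positivity) h2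
  have hsqrtA : Real.sqrt A = (c + p)⁻¹ := by
    rw [hAdef, Real.sqrt_inv, Real.sqrt_sq hcp.le]
  have hsqrtB : Real.sqrt B = c⁻¹ := by
    rw [hBdef, Real.sqrt_inv, Real.sqrt_sq hc.le]
  have hm1 : EqOn m (fun _ => p) (Set.Ioc 0 A) := by
    intro u hu
    have hsu : 0 < Real.sqrt u := Real.sqrt_pos.mpr hu.1
    have h1 : Real.sqrt u ≤ (c + p)⁻¹ := by
      rw [← hsqrtA]; exact Real.sqrt_le_sqrt hu.2
    have h2 : c + p ≤ (Real.sqrt u)⁻¹ := by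
      have := inv_anti₀ hsu h1
      rwa [inv_inv] at this
    simp only [hmdef]
    rw [max_eq_right (by linarith), min_eq_left (by linarith)]
  have hm2 : EqOn m (fun u => (Real.sqrt u)⁻¹ - c) (Set.Ioc A B) := by
    intro u hu
    have hsu : 0 < Real.sqrt u := Real.sqrt_pos.mpr (lt_trans hA hu.1)
    have h1 : (c + p)⁻¹ < Real.sqrt u := by
      rw [← hsqrtA]; exact Real.sqrt_lt_sqrt hA.le hu.1
    have h2 : (Real.sqrt u)⁻¹ < c + p := by
      have := inv_strictAnti₀ (by positivity) h1
      rwa [inv_inv] at this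
    have h3 : Real.sqrt u ≤ c⁻¹ := by
      rw [← hsqrtB]; exact Real.sqrt_le_sqrt hu.2
    have h4 : c ≤ (Real.sqrt u)⁻¹ := by
      have := inv_anti₀ hsu h3
      rwa [inv_inv] at this
    simp only [hmdef]
    rw [max_eq_right (by linarith), min_eq_right (by linarith)]
  have hm3 : EqOn m (fun _ => (0:ℝ)) (Set.Ioi B) := by
    intro u hu
    have h1 : c⁻¹ < Real.sqrt u := by
      rw [← hsqrtB]; exact Real.sqrt_lt_sqrt hB.le hu
    have h2 : (Real.sqrt u)⁻¹ < c := by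
      have := inv_strictAnti₀ (by positivity) h1
      rwa [inv_inv] at this
    simp only [hmdef]
    rw [max_eq_left (by linarith), min_eq_right hp0]
  -- integrability of m on the pieces
  have intOn1 : IntegrableOn m (Set.Ioc 0 A) volume := by
    apply ((integrableOn_const_iff (C := p)).mpr (Or.inr ?_)).congr_fun hm1.symm measurableSet_Ioc
    rw [Real.volume_Ioc]; exact ENNReal.ofReal_lt_top
  have gcont : ContinuousOn (fun u => (Real.sqrt u)⁻¹ - c) (Set.Icc A B) := by
    apply ContinuousOn.sub _ continuousOn_const
    apply ContinuousOn.inv₀ (Real.continuous_sqrt.continuousOn)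
    intro x hx
    exact (Real.sqrt_pos.mpr (lt_of_lt_of_le hA hx.1)).ne'
  have intOn2 : IntegrableOn m (Set.Ioc A B) volume :=
    ((gcont.integrableOn_Icc).mono_set Set.Ioc_subset_Icc_self).congr_fun hm2.symm
      measurableSet_Ioc
  have intOn3 : IntegrableOn m (Set.Ioi B) volume :=
    (integrableOn_zero).congr_fun hm3.symm measurableSet_Ioi
  have hunion : Set.Ioc (0:ℝ) A ∪ Set.Ioc A B ∪ Set.Ioi B = Set.Ioi 0 := by
    rw [Set.Ioc_union_Ioc_eq_Ioc hA.le hAB.le, Set.Ioc_union_Ioi_eq_Ioi hB.le]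
  have D1 : Disjoint (Set.Ioc (0:ℝ) A) (Set.Ioc A B) :=
    Set.disjoint_left.mpr fun x hx hx' => absurd hx.2 (not_le.mpr hx'.1)
  have D2 : Disjoint (Set.Ioc (0:ℝ) A ∪ Set.Ioc A B) (Set.Ioi B) := by
    apply Set.disjoint_left.mpr
    rintro x (hx | hx) hx'
    · exact absurd hx' (not_lt.mpr (hx.2.trans hAB.le))
    · exact absurd hx' (not_lt.mpr hx.2)
  have hmint : IntegrableOn m (Set.Ioi 0) volume := hunion ▸ ((intOn1.union intOn2).union intOn3)
  -- compute the three pieces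
  have I1 : ∫ u in Set.Ioc (0:ℝ) A, m u = p * A := by
    rw [setIntegral_congr_fun measurableSet_Ioc hm1, setIntegral_const, Real.volume_real_Ioc_of_le hA.le,
      smul_eq_mul, sub_zero, mul_comm]
  have I2 : ∫ u in Set.Ioc A B, m u = (2 * c⁻¹ - c * B) - (2 * (c + p)⁻¹ - c * A) := by
    rw [setIntegral_congr_fun measurableSet_Ioc hm2, ← intervalIntegral.integral_of_le hAB.le]
    have hderiv : ∀ x ∈ Set.uIcc A B, HasDerivAt (fun u => 2 * Real.sqrt u - c * u)
        ((Real.sqrt x)⁻¹ - c) x := by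
      intro x hx
      rw [Set.uIcc_of_le hAB.le] at hx
      have hx0 : 0 < x := lt_of_lt_of_le hA hx.1
      have hsx : 0 < Real.sqrt x := Real.sqrt_pos.mpr hx0
      have h1 := (Real.hasDerivAt_sqrt hx0.ne').const_mul 2
      have h2 := (hasDerivAt_id x).const_mul c
      refine (h1.sub h2).congr_deriv ?_
      field_simp
    have := intervalIntegral.integral_eq_sub_of_hasDerivAt hderiv ?_
    · rw [this, hsqrtA, hsqrtB]
    · apply ContinuousOn.intervalIntegrable
      rw [Set.uIcc_of_le hAB.le]; exact gcont
  have I3 : ∫ u in Set.Ioi B, m u = 0 := by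
    rw [setIntegral_congr_fun measurableSet_Ioi hm3]; simp
  have Isum : ∫ u in Set.Ioi (0:ℝ), m u = p * A + ((2 * c⁻¹ - c * B) - (2 * (c + p)⁻¹ - c * A)) := by
    rw [← hunion, setIntegral_union D2 measurableSet_Ioi (intOn1.union intOn2) intOn3,
      setIntegral_union D1 measurableSet_Ioc intOn1 intOn2, I1, I2, I3, add_zero]
  -- put it together
  rw [key]
  have hle2 : ∫ u in Set.Ioi (0:ℝ), ((μ.restrict (Set.Iic s)) {x | u < f x}).toReal
      ≤ ∫ u in Set.Ioi (0:ℝ), m u := by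
    apply integral_mono_of_nonneg
    · exact Filter.Eventually.of_forall fun u => ENNReal.toReal_nonneg
    · exact hmint
    · exact (ae_restrict_iff' measurableSet_Ioi).mpr (Filter.Eventually.of_forall claim1)
  refine le_trans hle2 (le_of_eq ?_)
  rw [Isum]
  have hc' : c ≠ 0 := hc.ne'
  have hcp' : c + p ≠ 0 := hcp.ne'
  rw [hAdef, hBdef]
  field_simp
  ring

lemma null_of_disjoint_msupport (μ : Measure ℝ) {S : Set ℝ} (h : ∀ x ∈ S, x ∉ msupport μ) :
    μ S = 0 := by
  apply measure_null_of_locally_null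
  intro x hx
  have hxn := h x hx
  simp only [msupport, Set.mem_setOf_eq] at hxn
  push_neg at hxn
  obtain ⟨U, hU, hU0⟩ := hxn
  exact ⟨U, mem_nhdsWithin_of_mem_nhds hU, hU0⟩

/-- If `μ` agrees with Lebesgue measure on `(t₂, t₁) ⊆ [a, b]` then, with
`p₁ = μ[t₁, b]` and `p₂ = μ[a, t₂]`, for every `t ∈ (t₂, t₁)`:
`-∫_{ℝ∖(t₂,t₁)} (t-x)⁻² dμ - 1/(t-t₁) + 1/(t-t₂) ≥ 1/((t-t₂+p₂)(t₁-t+p₁)) > 0`. -/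
theorem cder_bound_on_lebesgue_interval (μ : Measure ℝ) (a b : ℝ) [IsProbabilityMeasure μ]
    (hle : μ ≤ volume) (hsupp : msupport μ ⊆ Set.Icc a b)
    (ha : a ∈ msupport μ) (hb : b ∈ msupport μ) (hab : 1 < b - a)
    (t₁ t₂ : ℝ) (ht : t₂ < t₁) (hsub : Set.Ioo t₂ t₁ ⊆ Set.Icc a b)
    (hagree : ∀ E : Set ℝ, MeasurableSet E → E ⊆ Set.Ioo t₂ t₁ → μ E = volume E) :
    ∀ t ∈ Set.Ioo t₂ t₁,
      1 / ((t - t₂ + (μ (Set.Icc a t₂)).toReal) * (t₁ - t + (μ (Set.Icc t₁ b)).toReal)) ≤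
        -(∫ x in (Set.Ioo t₂ t₁)ᶜ, ((t - x) ^ 2)⁻¹ ∂μ) - 1 / (t - t₁) + 1 / (t - t₂) ∧
      0 < 1 / ((t - t₂ + (μ (Set.Icc a t₂)).toReal) *
          (t₁ - t + (μ (Set.Icc t₁ b)).toReal)) := by
  intro t htt
  obtain ⟨ht2, ht1⟩ := htt
  have hc₂ : 0 < t - t₂ := by linarith
  have hc₁ : 0 < t₁ - t := by linarith
  -- endpoints
  have hat2 : a ≤ t₂ := by
    by_contra h
    push_neg at h
    have hmin : t₂ < min a t₁ := lt_min h ht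
    have hx1 : t₂ < (t₂ + min a t₁) / 2 := by linarith
    have hx2 : (t₂ + min a t₁) / 2 < min a t₁ := by linarith
    have hxa : (t₂ + min a t₁) / 2 < a := lt_of_lt_of_le hx2 (min_le_left _ _)
    have hxt1 : (t₂ + min a t₁) / 2 < t₁ := lt_of_lt_of_le hx2 (min_le_right _ _)
    exact absurd (hsub ⟨hx1, hxt1⟩).1 (not_le.mpr hxa)
  have ht1b : t₁ ≤ b := by
    by_contra h
    push_neg at h
    have hmax : max b t₂ < t₁ := max_lt h ht
    have hx1 : max b t₂ < (max b t₂ + t₁) / 2 := by linarith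
    have hx2 : (max b t₂ + t₁) / 2 < t₁ := by linarith
    have hxb : b < (max b t₂ + t₁) / 2 := lt_of_le_of_lt (le_max_left _ _) hx1
    have hxt2 : t₂ < (max b t₂ + t₁) / 2 := lt_of_le_of_lt (le_max_right _ _) hx1
    exact absurd (hsub ⟨hxt2, hx2⟩).2 (not_le.mpr hxb)
  -- null outside [a,b]
  have hIio : μ (Set.Iio a) = 0 :=
    null_of_disjoint_msupport μ fun x hx hmem => absurd (hsupp hmem).1 (not_le.mpr hx)
  have hIoi : μ (Set.Ioi b) = 0 :=
    null_of_disjoint_msupport μ fun x hx hmem => absurd (hsupp hmem).2 (not_le.mpr hx)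
  -- identify the tail masses
  have hP : μ (Set.Icc a t₂) = μ (Set.Iic t₂) := by
    apply le_antisymm (measure_mono Set.Icc_subset_Iic_self)
    calc μ (Set.Iic t₂) ≤ μ (Set.Iio a ∪ Set.Icc a t₂) := by
          apply measure_mono
          intro x hx
          rcases lt_or_ge x a with h | h
          · exact Or.inl h
          · exact Or.inr ⟨h, hx⟩
      _ ≤ μ (Set.Iio a) + μ (Set.Icc a t₂) := measure_union_le _ _
      _ = μ (Set.Icc a t₂) := by rw [hIio, zero_add]
  have hQ : μ (Set.Icc t₁ b) = μ (Set.Ici t₁) := by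
    apply le_antisymm (measure_mono Set.Icc_subset_Ici_self)
    calc μ (Set.Ici t₁) ≤ μ (Set.Ioi b ∪ Set.Icc t₁ b) := by
          apply measure_mono
          intro x hx
          rcases lt_or_ge b x with h | h
          · exact Or.inl h
          · exact Or.inr ⟨hx, h⟩
      _ ≤ μ (Set.Ioi b) + μ (Set.Icc t₁ b) := measure_union_le _ _
      _ = μ (Set.Icc t₁ b) := by rw [hIoi, zero_add]
  have hp0 : 0 ≤ (μ (Set.Icc a t₂)).toReal := ENNReal.toReal_nonneg
  have hq0 : 0 ≤ (μ (Set.Icc t₁ b)).toReal := ENNReal.toReal_nonneg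
  -- total mass identity
  have hvol : μ (Set.Ioo t₂ t₁) = ENNReal.ofReal (t₁ - t₂) := by
    rw [hagree _ measurableSet_Ioo subset_rfl, Real.volume_Ioo]
  have hsum : (μ (Set.Icc a t₂)).toReal + (t₁ - t₂) + (μ (Set.Icc t₁ b)).toReal = 1 := by
    have hdj : Disjoint (Set.Ioo t₂ t₁) (Set.Ici t₁) :=
      Set.disjoint_left.mpr fun x (hx : x ∈ Set.Ioo t₂ t₁) (hx' : x ∈ Set.Ici t₁) =>
        absurd hx.2 (not_lt.mpr hx')
    have h1 : μ (Set.Ioi t₂) = μ (Set.Ioo t₂ t₁) + μ (Set.Ici t₁) := by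
      rw [← measure_union hdj measurableSet_Ici, Set.Ioo_union_Ici_eq_Ioi ht]
    have h2 : μ (Set.Iic t₂) + μ (Set.Ioi t₂) = 1 := by
      rw [← measure_union (Set.Iic_disjoint_Ioi le_rfl) measurableSet_Ioi, Set.Iic_union_Ioi,
        measure_univ]
    rw [h1, hvol, ← hP, ← hQ] at h2
    have h3 := congrArg ENNReal.toReal h2
    rw [ENNReal.toReal_add (measure_ne_top μ _) (by finiteness),
      ENNReal.toReal_add ENNReal.ofReal_ne_top (measure_ne_top μ _),
      ENNReal.toReal_ofReal (by linarith), ENNReal.toReal_one] at h3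
    linarith
  -- the integrand
  have hfm : Measurable (fun x : ℝ => ((t - x) ^ 2)⁻¹) := by fun_prop
  have hfnn : ∀ x : ℝ, 0 ≤ ((t - x) ^ 2)⁻¹ := fun x => by positivity
  have hintL : IntegrableOn (fun x : ℝ => ((t - x) ^ 2)⁻¹) (Set.Iic t₂) μ := by
    apply integrableOn_of_bdd measurableSet_Iic hfm (C := ((t - t₂) ^ 2)⁻¹)
    intro x hx
    have hx' : x ≤ t₂ := hx
    rw [_root_.abs_of_nonneg (hfnn x)]
    exact inv_anti₀ (by positivity) (by nlinarith)
  have hintR : IntegrableOn (fun x : ℝ => ((t - x) ^ 2)⁻¹) (Set.Ici t₁) μ := by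
    apply integrableOn_of_bdd measurableSet_Ici hfm (C := ((t₁ - t) ^ 2)⁻¹)
    intro x hx
    have hx' : t₁ ≤ x := hx
    rw [_root_.abs_of_nonneg (hfnn x)]
    exact inv_anti₀ (by positivity) (by nlinarith)
  have hcompl : (Set.Ioo t₂ t₁)ᶜ = Set.Iic t₂ ∪ Set.Ici t₁ := by
    ext x
    simp only [Set.mem_compl_iff, Set.mem_Ioo, not_and_or, not_lt, Set.mem_union, Set.mem_Iic,
      Set.mem_Ici]
  have hsplit : ∫ x in (Set.Ioo t₂ t₁)ᶜ, ((t - x) ^ 2)⁻¹ ∂μ =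
      (∫ x in Set.Iic t₂, ((t - x) ^ 2)⁻¹ ∂μ) + ∫ x in Set.Ici t₁, ((t - x) ^ 2)⁻¹ ∂μ := by
    rw [hcompl, setIntegral_union (Set.Iic_disjoint_Ici.mpr (not_le.mpr (lt_trans ht2 ht1)))
      measurableSet_Ici hintL hintR]
  -- left tail bound
  have hL := side_bound μ hle t₂ (t - t₂) hc₂
  rw [show t₂ + (t - t₂) = t by ring] at hL
  rw [← hP] at hL
  -- right tail bound via reflection
  haveI : IsProbabilityMeasure (μ.map (fun x : ℝ => -x)) :=
    Measure.isProbabilityMeasure_map measurable_neg.aemeasurable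
  have hleν : μ.map (fun x : ℝ => -x) ≤ volume := by
    have h := Measure.map_mono hle measurable_neg
    rwa [Measure.map_neg_eq_self (volume : Measure ℝ)] at h
  have hR := side_bound (μ.map (fun x : ℝ => -x)) hleν (-t₁) (t₁ - t) hc₁
  have hpre : (fun x : ℝ => -x) ⁻¹' Set.Iic (-t₁) = Set.Ici t₁ := by
    ext x
    simp [neg_le_neg_iff, neg_le]
  rw [setIntegral_map measurableSet_Iic
    ((by fun_prop : Measurable fun y : ℝ => ((-t₁ + (t₁ - t) - y) ^ 2)⁻¹).aestronglyMeasurable)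
    measurable_neg.aemeasurable, hpre,
    Measure.map_apply measurable_neg measurableSet_Iic, hpre] at hR
  simp only [show ∀ x : ℝ, -t₁ + (t₁ - t) - -x = -(t - x) from fun x => by ring, neg_sq] at hR
  rw [← hQ] at hR
  -- combine
  set X : ℝ := t - t₂ + (μ (Set.Icc a t₂)).toReal with hXd
  set Y : ℝ := t₁ - t + (μ (Set.Icc t₁ b)).toReal with hYd
  have hX : 0 < X := by rw [hXd]; linarith
  have hY : 0 < Y := by rw [hYd]; linarith
  have hXY : X + Y = 1 := by rw [hXd, hYd]; linarith
  have hprod : 1 / (X * Y) = 1 / X + 1 / Y := by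
    field_simp
    linarith
  have hneg : 1 / (t - t₁) = -(1 / (t₁ - t)) := by
    rw [show t - t₁ = -(t₁ - t) by ring, one_div, one_div, inv_neg]
  constructor
  · rw [hprod, hneg, hsplit]
    have e1 : 1 / (t - t₂) - 1 / X = 1 / (t - t₂) - 1 / (t - t₂ + (μ (Set.Icc a t₂)).toReal) := by
      rw [hXd]
    linarith [hL, hR]
  · exact one_div_pos.mpr (mul_pos hX hY)
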